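/- For any number of users K ≥ 2 and any choice of normalized cross-delays l'_{ij}, the independence rate of the interference graphs is at most K/2; that is, limsup_{T→∞} α(G_{K,T})/T ≤ K/2. -/

import Mathlib

/-- The time-indexed interference graph `G_{K,T}` of the `K`-user LOS interference
channel with normalized cross-delays `l i j` (representing `l'_{ij}` for `i ≠ j`). -/
def interferenceGraph (K T : ℕ) (l : Fin K → Fin K → ℤ) :
    SimpleGraph (Fin K × Fin T) where
  Adj a b := a.1 ≠ b.1 ∧
    (((b.2 : ℕ) : ℤ) = ((a.2 : ℕ) : ℤ) + l b.1 a.1 ∨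
     ((a.2 : ℕ) : ℤ) = ((b.2 : ℕ) : ℤ) + l a.1 b.1)
  symm := by
    refine ⟨?_⟩
    rintro a b ⟨h1, h2⟩
    exact ⟨h1.symm, h2.symm⟩
  loopless := by
    refine ⟨?_⟩
    rintro a ⟨h, -⟩
    exact h rfl

/-- The independence number of a graph on a finite vertex type: the maximum size of
a set of vertices no two of which are adjacent. -/
noncomputable def indepNum {V : Type*} [Fintype V] (G : SimpleGraph V) : ℕ :=
  sSup {n : ℕ | ∃ s : Finset V, (∀ u ∈ s, ∀ v ∈ s, ¬ G.Adj u v) ∧ s.card = n}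

open Finset

/-- For a pair of distinct users `i, j`, the times used by `i` shifted by `l j i`
avoid the times used by `j`, giving a bound on the sum of the two fiber sizes. -/
lemma pair_card_le (K T : ℕ) (l : Fin K → Fin K → ℤ) (s : Finset (Fin K × Fin T))
    (hs : ∀ u ∈ s, ∀ v ∈ s, ¬ (interferenceGraph K T l).Adj u v)
    (i j : Fin K) (hij : i ≠ j) :
    (s.filter (fun v => v.1 = i)).card + (s.filter (fun v => v.1 = j)).card
      ≤ T + (l j i).natAbs := by
  set L := l j i with hL
  set A : Finset ℤ := (s.filter (fun v => v.1 = i)).image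
      (fun v => ((v.2 : ℕ) : ℤ) + L) with hA
  set B : Finset ℤ := (s.filter (fun v => v.1 = j)).image
      (fun v => ((v.2 : ℕ) : ℤ)) with hB
  have hAcard : A.card = (s.filter (fun v => v.1 = i)).card := by
    apply Finset.card_image_of_injOn
    intro u hu v hv huv
    simp only [mem_coe, mem_filter] at hu hv
    simp only at huv
    have h2 : (u.2 : ℕ) = (v.2 : ℕ) := by omega
    have : u.2 = v.2 := Fin.ext h2
    exact Prod.ext (hu.2.trans hv.2.symm) this
  have hBcard : B.card = (s.filter (fun v => v.1 = j)).card := by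
    apply Finset.card_image_of_injOn
    intro u hu v hv huv
    simp only [mem_coe, mem_filter] at hu hv
    simp only at huv
    have h2 : (u.2 : ℕ) = (v.2 : ℕ) := by omega
    have : u.2 = v.2 := Fin.ext h2
    exact Prod.ext (hu.2.trans hv.2.symm) this
  have hdisj : Disjoint A B := by
    rw [Finset.disjoint_left]
    intro x hxA hxB
    simp only [hA, hB, Finset.mem_image, mem_filter] at hxA hxB
    obtain ⟨u, ⟨hu, hui⟩, hux⟩ := hxA
    obtain ⟨w, ⟨hw, hwj⟩, hwx⟩ := hxB
    apply hs u hu w hw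
    constructor
    · rw [hui, hwj]; exact hij
    · left
      rw [hui, hwj, ← hL, hwx, ← hux]
  have hsub : A ∪ B ⊆ Finset.Ico (min 0 L) ((T : ℤ) + max 0 L) := by
    intro x hx
    rw [Finset.mem_union] at hx
    rw [Finset.mem_Ico]
    rcases hx with hx | hx
    · simp only [hA, Finset.mem_image, mem_filter] at hx
      obtain ⟨u, _, hux⟩ := hx
      have h1 : (0 : ℤ) ≤ (u.2 : ℕ) := Int.natCast_nonneg _
      have h2 : ((u.2 : ℕ) : ℤ) < T := by exact_mod_cast u.2.isLt
      constructor
      · have : min 0 L ≤ L := min_le_right _ _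
        omega
      · have : L ≤ max 0 L := le_max_right _ _
        omega
    · simp only [hB, Finset.mem_image, mem_filter] at hx
      obtain ⟨u, _, hux⟩ := hx
      have h1 : (0 : ℤ) ≤ (u.2 : ℕ) := Int.natCast_nonneg _
      have h2 : ((u.2 : ℕ) : ℤ) < T := by exact_mod_cast u.2.isLt
      constructor
      · have : min 0 L ≤ 0 := min_le_left _ _
        omega
      · have : (0 : ℤ) ≤ max 0 L := le_max_left _ _
        omega
  have hIcoCard : (Finset.Ico (min 0 L) ((T : ℤ) + max 0 L)).card = T + L.natAbs := by
    rw [Int.card_Ico]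
    rcases le_total 0 L with h | h
    · rw [min_eq_left h, max_eq_right h]
      omega
    · rw [min_eq_right h, max_eq_left h]
      omega
  calc (s.filter (fun v => v.1 = i)).card + (s.filter (fun v => v.1 = j)).card
      = A.card + B.card := by rw [hAcard, hBcard]
    _ = (A ∪ B).card := (Finset.card_union_of_disjoint hdisj).symm
    _ ≤ (Finset.Ico (min 0 L) ((T : ℤ) + max 0 L)).card := Finset.card_le_card hsub
    _ = T + L.natAbs := hIcoCard

lemma indep_card_le (K T : ℕ) (hK : 2 ≤ K) (l : Fin K → Fin K → ℤ)
    (s : Finset (Fin K × Fin T))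
    (hs : ∀ u ∈ s, ∀ v ∈ s, ¬ (interferenceGraph K T l).Adj u v) :
    2 * s.card ≤ K * T + K * ∑ i : Fin K, ∑ j : Fin K, (l i j).natAbs := by
  haveI : NeZero K := ⟨by omega⟩
  have hone : (1 : Fin K) ≠ 0 := by
    intro h
    have h1 : ((1 : Fin K) : ℕ) = 1 % K := Fin.val_one' K
    have := congrArg Fin.val h
    rw [h1] at this
    simp at this
    omega
  set c : ℕ := ∑ i : Fin K, ∑ j : Fin K, (l i j).natAbs with hc
  have hfib : s.card = ∑ i : Fin K, (s.filter (fun v => v.1 = i)).card :=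
    Finset.card_eq_sum_card_fiberwise (fun v _ => Finset.mem_univ v.1)
  have hshift : ∑ i : Fin K, (s.filter (fun v => v.1 = i + 1)).card
      = ∑ i : Fin K, (s.filter (fun v => v.1 = i)).card := by
    apply Fintype.sum_equiv (Equiv.addRight (1 : Fin K))
    intro i
    rfl
  have habs : ∀ i j : Fin K, (l i j).natAbs ≤ c := by
    intro i j
    calc (l i j).natAbs ≤ ∑ j' : Fin K, (l i j').natAbs :=
          Finset.single_le_sum (f := fun j' => (l i j').natAbs)
            (fun _ _ => Nat.zero_le _) (Finset.mem_univ j)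
      _ ≤ c := Finset.single_le_sum
          (f := fun i' => ∑ j' : Fin K, (l i' j').natAbs)
          (fun _ _ => Nat.zero_le _) (Finset.mem_univ i)
  have key : ∀ i : Fin K,
      (s.filter (fun v => v.1 = i)).card + (s.filter (fun v => v.1 = i + 1)).card
        ≤ T + c := by
    intro i
    have hne : i ≠ i + 1 := by
      intro h
      apply hone
      apply add_left_cancel (a := i)
      rw [add_zero]
      exact h.symm
    have := pair_card_le K T l s hs i (i + 1) hne
    have := habs (i + 1) i
    omega
  calc 2 * s.card
      = ∑ i : Fin K, (s.filter (fun v => v.1 = i)).card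
        + ∑ i : Fin K, (s.filter (fun v => v.1 = i + 1)).card := by
        rw [hshift, hfib]; ring
    _ = ∑ i : Fin K, ((s.filter (fun v => v.1 = i)).card
        + (s.filter (fun v => v.1 = i + 1)).card) := (Finset.sum_add_distrib).symm
    _ ≤ ∑ _i : Fin K, (T + c) := Finset.sum_le_sum (fun i _ => key i)
    _ = K * T + K * c := by
        rw [Finset.sum_const, Finset.card_univ, Fintype.card_fin, smul_eq_mul]
        ring

lemma indepNum_le (K T : ℕ) (hK : 2 ≤ K) (l : Fin K → Fin K → ℤ) :
    2 * indepNum (interferenceGraph K T l)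
      ≤ K * T + K * ∑ i : Fin K, ∑ j : Fin K, (l i j).natAbs := by
  set m : ℕ := K * T + K * ∑ i : Fin K, ∑ j : Fin K, (l i j).natAbs with hm
  have h : indepNum (interferenceGraph K T l) ≤ m / 2 := by
    apply csSup_le
    · exact ⟨0, ∅, by simp⟩
    · rintro n ⟨s, hs, rfl⟩
      rw [Nat.le_div_iff_mul_le (by norm_num)]
      have := indep_card_le K T hK l s hs
      omega
  have h2 : m / 2 * 2 ≤ m := Nat.div_mul_le_self m 2
  omega

/-- For any number of users `K ≥ 2` and any normalized cross-delays, the independence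
rate of the interference graphs is at most `K/2`:
`limsup_{T→∞} α(G_{K,T})/T ≤ K/2`. -/
theorem independence_rate_le (K : ℕ) (hK : 2 ≤ K) (l : Fin K → Fin K → ℤ) :
    Filter.limsup
        (fun T : ℕ => (indepNum (interferenceGraph K T l) : ℝ) / T)
        Filter.atTop
      ≤ K / 2 := by
  set c : ℕ := K * ∑ i : Fin K, ∑ j : Fin K, (l i j).natAbs with hc
  set f : ℕ → ℝ := fun T => (indepNum (interferenceGraph K T l) : ℝ) / T with hf
  set g : ℕ → ℝ := fun T => (K : ℝ) / 2 + (c : ℝ) / 2 / T with hg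
  have hfg : ∀ T : ℕ, 1 ≤ T → f T ≤ g T := by
    intro T hT
    have hT0 : (0 : ℝ) < T := by exact_mod_cast hT
    have hb : (2 : ℝ) * (indepNum (interferenceGraph K T l) : ℝ) ≤ K * T + c := by
      have h := indepNum_le K T hK l
      have : ((2 * indepNum (interferenceGraph K T l) : ℕ) : ℝ)
          ≤ ((K * T + c : ℕ) : ℝ) := by exact_mod_cast h
      push_cast at this
      linarith
    rw [hf, hg]
    rw [div_le_iff₀ hT0]
    have heq : ((K : ℝ) / 2 + (c : ℝ) / 2 / T) * T = K * T / 2 + c / 2 := by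
      field_simp
    rw [heq]
    linarith
  have hgt : Filter.Tendsto g Filter.atTop (nhds ((K : ℝ) / 2)) := by
    have h0 : Filter.Tendsto (fun T : ℕ => (c : ℝ) / 2 / T) Filter.atTop (nhds 0) :=
      Filter.Tendsto.div_atTop tendsto_const_nhds tendsto_natCast_atTop_atTop
    have := Filter.Tendsto.add (tendsto_const_nhds
      (x := (K : ℝ) / 2) (f := Filter.atTop (α := ℕ))) h0
    simpa using this
  have hglimsup : Filter.limsup g Filter.atTop = (K : ℝ) / 2 := hgt.limsup_eq
  have hfbdd : Filter.IsBoundedUnder (· ≥ ·) Filter.atTop f := by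
    apply Filter.isBoundedUnder_of
    exact ⟨0, fun T => div_nonneg (Nat.cast_nonneg _) (Nat.cast_nonneg _)⟩
  have hgbdd : Filter.IsBoundedUnder (· ≤ ·) Filter.atTop g :=
    hgt.isBoundedUnder_le
  calc Filter.limsup f Filter.atTop
      ≤ Filter.limsup g Filter.atTop := by
        apply Filter.limsup_le_limsup
        · filter_upwards [Filter.eventually_ge_atTop 1] with T hT
          exact hfg T hT
        · exact hfbdd.isCoboundedUnder_le
        · exact hgbdd
    _ = (K : ℝ) / 2 := hglimsup
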